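/- Let f : ℝ^n → ℝ be convex and differentiable, X ⊆ ℝ^n convex, and h : ℝ^n → ℝ convex and differentiable with Bregman distance D_h. Suppose f attains its minimum f* on X with nonempty solution set X*, and for each x ∈ X the point x̄ := argmin_{y∈X*} D_h(y,x) exists and is unique. Suppose L > 0 satisfies D_f(y,x) ≤ L·D_h(y,x) for all x,y ∈ X, and μ > 0 satisfies f(x) − f* ≥ μ·D_h(x̄,x) for all x ∈ X. Let x_0 ∈ X and for each k ≥ 0 let x_{k+1} minimize y ↦ ⟨∇f(x_k), y⟩ + L·D_h(y,x_k) over y ∈ X. Then with K := ⌈2L/μ⌉, the iterates satisfy D_h(X*, x_{k+K}) ≤ (1/2)·D_h(X*, x_k) for all k ≥ 0, where D_h(X*, x) := inf_{y∈X*} D_h(y,x). -/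

import Mathlib

noncomputable section
open scoped RealInnerProductSpace
open Set

section AuxLemmas

variable {F : Type*} [NormedAddCommGroup F] [InnerProductSpace ℝ F] [CompleteSpace F]

/-- Gradient inequality for a convex differentiable function. -/
lemma aux_grad_ineq {φ : F → ℝ} {g : F → F} (hconv : ConvexOn ℝ univ φ)
    (hdiff : ∀ x, HasGradientAt φ (g x) x) (x y : F) :
    ⟪g x, y - x⟫ ≤ φ y - φ x := by
  have hline : HasDerivAt (fun t : ℝ => x + t • (y - x)) (y - x) 0 := by
    simpa using ((hasDerivAt_id (0 : ℝ)).smul_const (y - x)).const_add x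
  have hF : HasFDerivAt φ (InnerProductSpace.toDual ℝ F (g x)) x :=
    hasGradientAt_iff_hasFDerivAt.1 (hdiff x)
  have hψ : HasDerivAt (fun t : ℝ => φ (x + t • (y - x))) ⟪g x, y - x⟫ 0 := by
    have hF' : HasFDerivAt φ (InnerProductSpace.toDual ℝ F (g x)) (x + (0:ℝ) • (y - x)) := by
      simpa using hF
    have := hF'.comp_hasDerivAt (x := (0 : ℝ)) hline
    simpa [InnerProductSpace.toDual_apply_apply, Function.comp_def] using this
  have hψconv : ConvexOn ℝ univ (fun t : ℝ => φ (x + t • (y - x))) := by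
    have := hconv.comp_affineMap (AffineMap.lineMap x y)
    have heq : (fun t : ℝ => φ (x + t • (y - x))) = φ ∘ (AffineMap.lineMap x y) := by
      funext t
      simp [AffineMap.lineMap_apply_module']
      congr 1
      abel
    rw [heq]
    simpa using this
  have := hψconv.le_slope_of_hasDerivAt (mem_univ (0:ℝ)) (mem_univ (1:ℝ)) one_pos hψ
  have hs : slope (fun t : ℝ => φ (x + t • (y - x))) 0 1 = φ y - φ x := by
    simp [slope_def_field]
  rw [hs] at this
  exact this

/-- Variational inequality at a minimizer of the mirror-descent subproblem. -/
lemma aux_var_ineq {X : Set F} (hX : Convex ℝ X) (h : F → ℝ) (h' : F → F)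
    (hdiff : ∀ x, HasGradientAt h (h' x) x) (c a : F) (L : ℝ) {b y : F}
    (hb : b ∈ X) (hy : y ∈ X)
    (hmin : ∀ z ∈ X, ⟪c, b⟫ + L * (h b - h a - ⟪h' a, b - a⟫) ≤
      ⟪c, z⟫ + L * (h z - h a - ⟪h' a, z - a⟫)) :
    0 ≤ ⟪c, y - b⟫ + L * (⟪h' b, y - b⟫ - ⟪h' a, y - b⟫) := by
  set D := InnerProductSpace.toDual ℝ F with hD
  set φ : F → ℝ := fun z => ⟪c, z⟫ + L * (h z - h a - ⟪h' a, z - a⟫) with hφ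
  have p1 : HasFDerivAt (fun z : F => ⟪c, z⟫) (D c) b := by
    have := (D c).hasFDerivAt (x := b)
    convert this using 1; funext z; simp [hD, InnerProductSpace.toDual_apply_apply]
  have p2 : HasFDerivAt h (D (h' b)) b := hasGradientAt_iff_hasFDerivAt.1 (hdiff b)
  have p3 : HasFDerivAt (fun z : F => ⟪h' a, z - a⟫) (D (h' a)) b := by
    have := (D (h' a)).hasFDerivAt (x := b)
    have h2 : HasFDerivAt (fun z : F => ⟪h' a, z⟫) (D (h' a)) b := by
      convert this using 1; funext z; simp [hD, InnerProductSpace.toDual_apply_apply]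
    have h3 := h2.sub_const ⟪h' a, a⟫
    have heq : (fun z : F => ⟪h' a, z⟫ - ⟪h' a, a⟫) = fun z : F => ⟪h' a, z - a⟫ := by
      funext z; rw [← inner_sub_right]
    rwa [heq] at h3
  have hφd : HasFDerivAt φ (D c + L • (D (h' b) - D (h' a))) b :=
    p1.add ((((p2.sub_const (h a)).sub p3)).const_mul L)
  have hmin' : IsLocalMinOn φ X b :=
    eventually_nhdsWithin_of_forall fun z hz => hmin z hz
  have htang : y - b ∈ posTangentConeAt X b :=
    sub_mem_posTangentConeAt_of_segment_subset (hX.segment_subset hb hy)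
  have := hmin'.hasFDerivWithinAt_nonneg hφd.hasFDerivWithinAt htang
  simpa [hD, InnerProductSpace.toDual_apply_apply, mul_sub] using this

end AuxLemmas

/-- Proposition prop.lin.mirror.2: halving of the Bregman distance to the
optimal set every K = ⌈2L/μ⌉ iterations of mirror descent under relative functional growth. -/
theorem mirror_descent_halving_under_functional_growth {n : ℕ}
    (f : EuclideanSpace ℝ (Fin n) → ℝ)
    (f' : EuclideanSpace ℝ (Fin n) → EuclideanSpace ℝ (Fin n))
    (hfconv : ConvexOn ℝ Set.univ f)
    (hfdiff : ∀ x, HasGradientAt f (f' x) x)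
    (X : Set (EuclideanSpace ℝ (Fin n))) (hX : Convex ℝ X)
    (h : EuclideanSpace ℝ (Fin n) → ℝ)
    (h' : EuclideanSpace ℝ (Fin n) → EuclideanSpace ℝ (Fin n))
    (hhconv : ConvexOn ℝ Set.univ h)
    (hhdiff : ∀ x, HasGradientAt h (h' x) x)
    (Dh : EuclideanSpace ℝ (Fin n) → EuclideanSpace ℝ (Fin n) → ℝ)
    (hDh : ∀ y x, Dh y x = h y - h x - ⟪h' x, y - x⟫)
    (fstar : ℝ)
    (hmin : ∃ z ∈ X, f z = fstar ∧ ∀ y ∈ X, fstar ≤ f y)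
    (Xstar : Set (EuclideanSpace ℝ (Fin n)))
    (hXstar : Xstar = {x | x ∈ X ∧ f x = fstar})
    (xbar : EuclideanSpace ℝ (Fin n) → EuclideanSpace ℝ (Fin n))
    (hbar : ∀ x ∈ X, xbar x ∈ Xstar ∧ ∀ y ∈ Xstar, Dh (xbar x) x ≤ Dh y x)
    (hbar_unique : ∀ x ∈ X, ∀ y ∈ Xstar, (∀ z ∈ Xstar, Dh y x ≤ Dh z x) → y = xbar x)
    (L : ℝ) (hL : 0 < L)
    (hsmooth : ∀ x ∈ X, ∀ y ∈ X, f y - f x - ⟪f' x, y - x⟫ ≤ L * Dh y x)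
    (μ : ℝ) (hμ : 0 < μ)
    (hgrowth : ∀ x ∈ X, μ * Dh (xbar x) x ≤ f x - fstar)
    (x : ℕ → EuclideanSpace ℝ (Fin n))
    (hx0 : x 0 ∈ X)
    (hiter : ∀ k : ℕ, x (k + 1) ∈ X ∧ ∀ y ∈ X,
      ⟪f' (x k), x (k + 1)⟫ + L * Dh (x (k + 1)) (x k) ≤ ⟪f' (x k), y⟫ + L * Dh y (x k))
    (K : ℕ) (hK : K = ⌈2 * L / μ⌉₊) :
    ∀ k : ℕ, sInf {r | ∃ y ∈ Xstar, r = Dh y (x (k + K))}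
      ≤ (1 / 2) * sInf {r | ∃ y ∈ Xstar, r = Dh y (x k)} := by
  have hXmem : ∀ m, x m ∈ X := by
    intro m
    induction m with
    | zero => exact hx0
    | succ m _ => exact (hiter m).1
  have hXsub : Xstar ⊆ X := by rw [hXstar]; exact fun z hz => hz.1
  have hfeq : ∀ z ∈ Xstar, f z = fstar := by rw [hXstar]; exact fun z hz => hz.2
  have hDh0 : ∀ u v, 0 ≤ Dh u v := by
    intro u v
    have := aux_grad_ineq hhconv hhdiff v u
    rw [hDh]
    linarith
  have hsInf : ∀ m, sInf {r | ∃ y ∈ Xstar, r = Dh y (x m)} = Dh (xbar (x m)) (x m) := by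
    intro m
    apply IsLeast.csInf_eq
    constructor
    · exact ⟨xbar (x m), (hbar (x m) (hXmem m)).1, rfl⟩
    · rintro r ⟨y, hy, rfl⟩
      exact (hbar (x m) (hXmem m)).2 y hy
  have key : ∀ m, (L + μ) * Dh (xbar (x (m+1))) (x (m+1)) ≤ L * Dh (xbar (x m)) (x m) := by
    intro m
    set a := x m with ha
    set b := x (m+1) with hb
    set w := xbar (x m) with hw
    have hwstar : w ∈ Xstar := (hbar (x m) (hXmem m)).1
    have hwX : w ∈ X := hXsub hwstar
    have hfw : f w = fstar := hfeq w hwstar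
    have hsm : f b - f a - ⟪f' a, b - a⟫ ≤ L * Dh b a := hsmooth a (hXmem m) b (hXmem (m+1))
    have hfc : ⟪f' a, w - a⟫ ≤ f w - f a := aux_grad_ineq hfconv hfdiff a w
    have hVI : 0 ≤ ⟪f' a, w - b⟫ + L * (⟪h' b, w - b⟫ - ⟪h' a, w - b⟫) := by
      apply aux_var_ineq hX h h' hhdiff (f' a) a L (hXmem (m+1)) hwX
      intro z hz
      have h5 := (hiter m).2 z hz
      rw [hDh (x (m+1)) (x m), hDh z (x m)] at h5
      exact h5
    have h3pt : Dh w a - Dh b a - Dh w b = ⟪h' b, w - b⟫ - ⟪h' a, w - b⟫ := by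
      have e1 : ⟪h' a, w - a⟫ - ⟪h' a, b - a⟫ = ⟪h' a, w - b⟫ := by
        rw [← inner_sub_right]; congr 1; abel
      rw [hDh w a, hDh b a, hDh w b]
      linarith
    have e2 : ⟪f' a, b - a⟫ = ⟪f' a, w - a⟫ - ⟪f' a, w - b⟫ := by
      rw [← inner_sub_right]; congr 1; abel
    have hVI2 : 0 ≤ ⟪f' a, w - b⟫ + (L * Dh w a - L * Dh b a - L * Dh w b) := by
      have h4 : L * (⟪h' b, w - b⟫ - ⟪h' a, w - b⟫)
          = L * Dh w a - L * Dh b a - L * Dh w b := by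
        rw [← h3pt]; ring
      rw [h4] at hVI
      exact hVI
    have hdesc : f b - fstar ≤ L * Dh w a - L * Dh w b := by linarith
    have hgr : μ * Dh (xbar b) b ≤ f b - fstar := hgrowth b (hXmem (m+1))
    have hminb : Dh (xbar b) b ≤ Dh w b := (hbar b (hXmem (m+1))).2 w hwstar
    have hmul : L * Dh (xbar b) b ≤ L * Dh w b := mul_le_mul_of_nonneg_left hminb hL.le
    linarith
  have hLμ : (0:ℝ) < L + μ := by linarith
  have hstep : ∀ m, Dh (xbar (x (m+1))) (x (m+1)) ≤ (L / (L + μ)) * Dh (xbar (x m)) (x m) := by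
    intro m
    rw [div_mul_eq_mul_div, le_div_iff₀ hLμ]
    calc Dh (xbar (x (m+1))) (x (m+1)) * (L + μ)
        = (L + μ) * Dh (xbar (x (m+1))) (x (m+1)) := by ring
      _ ≤ L * Dh (xbar (x m)) (x m) := key m
  have hc0 : (0:ℝ) ≤ L / (L + μ) := by positivity
  have hpow : ∀ k j, Dh (xbar (x (k+j))) (x (k+j))
      ≤ (L / (L + μ))^j * Dh (xbar (x k)) (x k) := by
    intro k j
    induction j with
    | zero => simp
    | succ j ih =>
      rw [show k + (j+1) = (k+j) + 1 from rfl]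
      calc Dh (xbar (x ((k+j)+1))) (x ((k+j)+1))
          ≤ (L / (L + μ)) * Dh (xbar (x (k+j))) (x (k+j)) := hstep (k+j)
        _ ≤ (L / (L + μ)) * ((L / (L + μ))^j * Dh (xbar (x k)) (x k)) :=
            mul_le_mul_of_nonneg_left ih hc0
        _ = (L / (L + μ))^(j+1) * Dh (xbar (x k)) (x k) := by ring
  have hcK : (L / (L + μ))^K ≤ 1/2 := by
    have h2L : (2 * L / μ : ℝ) ≤ (K : ℝ) := by rw [hK]; exact Nat.le_ceil _
    have hr : (0:ℝ) < μ / L := by positivity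
    have hBern : 1 + (K : ℝ) * (μ / L) ≤ (1 + μ / L)^K := one_add_mul_le_pow (by linarith) K
    have hKr : (2:ℝ) ≤ (K : ℝ) * (μ / L) := by
      have hid : (2 * L / μ) * (μ / L) = 2 := by field_simp
      nlinarith [mul_le_mul_of_nonneg_right h2L hr.le]
    have h2pow : (2:ℝ) ≤ (1 + μ / L)^K := by linarith
    have hinv : (L / (L + μ)) = (1 + μ / L)⁻¹ := by
      have e : (1:ℝ) + μ / L = (L + μ) / L := by field_simp
      rw [e, inv_div]
    rw [hinv, inv_pow, show (1/2:ℝ) = 2⁻¹ by norm_num]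
    exact inv_anti₀ two_pos h2pow
  intro k
  rw [hsInf (k + K), hsInf k]
  calc Dh (xbar (x (k + K))) (x (k + K))
      ≤ (L / (L + μ))^K * Dh (xbar (x k)) (x k) := hpow k K
    _ ≤ (1/2) * Dh (xbar (x k)) (x k) :=
        mul_le_mul_of_nonneg_right hcK (hDh0 _ _)
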